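/- Let n ≥ 1 and let μ_n be the product of n copies of the uniform distribution on [0, 2π). Then the expected ℓ∞ condition number of a Haar-butterfly matrix equals N^ξ for ξ = log₂(1 + 2/π): ∫ ∏_{j=1}^n (1 + |sin(2θ_j)|) dμ_n(θ) = (1 + 2/π)ⁿ = N^{log₂(1 + 2/π)}, where N = 2ⁿ. (Here ∏_{j=1}^n (1 + |sin(2θ_j)|) = κ_∞(B(θ)) is the ℓ∞ condition number of the Haar-butterfly matrix B(θ).) -/

import Mathlib

open MeasureTheory Real

noncomputable def unif : Measure ℝ :=
  (ENNReal.ofReal (2 * π))⁻¹ • volume.restrict (Set.Ico 0 (2 * π))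

theorem abs_sin_int : ∫ x in (0:ℝ)..(2*π), |Real.sin (2*x)| = 4 := by
  have h2 : (2:ℝ) ≠ 0 := two_ne_zero
  rw [show (fun x : ℝ => |Real.sin (2*x)|) = fun x => (fun y => |Real.sin y|) (2*x) from rfl]
  rw [intervalIntegral.integral_comp_mul_left (fun y => |Real.sin y|) h2]
  have hper : Function.Periodic (fun y : ℝ => |Real.sin y|) π := by
    intro x; simp [Real.sin_add_pi, abs_neg]
  have hint : ∀ t₁ t₂ : ℝ, IntervalIntegrable (fun y : ℝ => |Real.sin y|) volume t₁ t₂ :=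
    fun t₁ t₂ => (Real.continuous_sin.abs).intervalIntegrable t₁ t₂
  have h4 : (2:ℝ) * (2*π) = 0 + (4:ℤ) • π := by simp [zsmul_eq_mul]; ring
  rw [mul_zero, h4, hper.intervalIntegral_add_zsmul_eq 4 0 hint]
  have : ∫ y in (0:ℝ)..(0+π), |Real.sin y| = 2 := by
    rw [zero_add]
    rw [intervalIntegral.integral_congr (g := Real.sin) ?_, integral_sin]
    · norm_num
    · intro x hx
      rw [Set.uIcc_of_le Real.pi_nonneg] at hx
      exact abs_of_nonneg (Real.sin_nonneg_of_nonneg_of_le_pi hx.1 hx.2)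
  rw [this]
  norm_num

theorem unif_integral : ∫ x, (1 + |Real.sin (2*x)|) ∂unif = 1 + 2/π := by
  have hπ : 0 < 2*π := by positivity
  rw [unif, integral_smul_measure, MeasureTheory.integral_Ico_eq_integral_Ioo, ← MeasureTheory.integral_Ioc_eq_integral_Ioo,
    ← intervalIntegral.integral_of_le hπ.le]
  have h1 : ∫ x in (0:ℝ)..(2*π), (1 + |Real.sin (2*x)|)
      = (2*π) + 4 := by
    have hc : Continuous fun x : ℝ => |Real.sin (2*x)| := by fun_prop
    rw [intervalIntegral.integral_add intervalIntegrable_const (hc.intervalIntegrable _ _),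
      abs_sin_int]
    simp [mul_comm]
  rw [h1, ENNReal.toReal_inv, ENNReal.toReal_ofReal hπ.le, smul_eq_mul]
  field_simp
  ring

noncomputable def μpi (n : ℕ) : Measure (Fin n → ℝ) :=
  Measure.pi fun _ => unif

instance : IsProbabilityMeasure unif := by
  constructor
  have hπ : 0 < 2*π := by positivity
  rw [unif]
  rw [Measure.smul_apply, Measure.restrict_apply_univ, Real.volume_Ico, sub_zero, smul_eq_mul,
    ENNReal.inv_mul_cancel (by simp [hπ, Real.pi_pos]) ENNReal.ofReal_ne_top]

theorem expected_cond_linf (n : ℕ) (hn : 1 ≤ n) :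
    (∫ θ : Fin n → ℝ, ∏ j, (1 + |Real.sin (2 * θ j)|) ∂(μpi n)) = (1 + 2 / π) ^ n ∧
    ((1 + 2 / π : ℝ)) ^ n = ((2 : ℝ) ^ n) ^ Real.logb 2 (1 + 2 / π) := by
  constructor
  · letI : MeasureSpace ℝ := ⟨unif⟩
    haveI : SigmaFinite (volume : Measure ℝ) := inferInstanceAs (SigmaFinite unif)
    have h := MeasureTheory.integral_fin_nat_prod_eq_prod
      (𝕜 := ℝ) (E := fun _ : Fin n => ℝ) (μ := fun _ => unif) (fun _ x => 1 + |Real.sin (2 * x)|)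
    have hvol : μpi n = (volume : Measure (Fin n → ℝ)) := rfl
    rw [μpi, h]
    simp only [Finset.prod_const, Finset.card_univ, Fintype.card_fin]
    rw [unif_integral]
  · have hc : (0:ℝ) < 1 + 2/π := by positivity
    rw [← Real.rpow_natCast (2:ℝ) n, ← Real.rpow_natCast (1+2/π) n,
      ← Real.rpow_mul (by norm_num : (0:ℝ) ≤ 2), mul_comm (n:ℝ),
      Real.rpow_mul (by norm_num : (0:ℝ) ≤ 2),
      Real.rpow_logb (by norm_num) (by norm_num) hc]
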